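/- Let d = k = 1 and let O ⊆ ℝ^l be an open set on which G(λ) ≠ 0. Define u*(λ) := y(λ)/G(λ) on O. Then u* is differentiable on O with ∂_{λ_i} u*(λ) = (y_i − G_i u*(λ)) / G(λ) for each i (equivalently, G_i u*(λ) = −G(λ) ∂_{λ_i} u*(λ) + y_i), and for every λ ∈ O the point given by m = u*(λ), E = u*(λ)², m_{λ_i} = ∂_{λ_i} u*(λ), E_{λ_i} = 2 u*(λ) ∂_{λ_i} u*(λ) is an equilibrium of the moment system at λ; that is, the Dirac point at the exact solution u*(λ) of the weighted problem, together with its λ-sensitivities, is a stationary state of the moment system. -/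

import Mathlib

/-!
In the scalar case `d = k = 1`, on an open set `O` where `G(λ) ≠ 0`, the exact solution
`u*(λ) = y(λ)/G(λ)` of the weighted problem is differentiable with
`∂_{λᵢ} u* = (yᵢ − Gᵢ u*)/G(λ)`, and the point `m = u*`, `E = (u*)²`,
`m_{λᵢ} = ∂_{λᵢ} u*`, `E_{λᵢ} = 2 u* ∂_{λᵢ} u*` is an equilibrium of the moment system:
the Dirac state at the exact solution, with its λ-sensitivities, is stationary.
-/

open Function

/-- `G(λ) = ∑ᵢ λᵢ Gᵢ` in the scalar case. -/
noncomputable def Gs {l : ℕ} (G : Fin l → ℝ) (lam : Fin l → ℝ) : ℝ := ∑ i, lam i * G i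

/-- `y(λ) = ∑ᵢ λᵢ yᵢ` in the scalar case. -/
noncomputable def ys {l : ℕ} (y : Fin l → ℝ) (lam : Fin l → ℝ) : ℝ := ∑ i, lam i * y i

/-- The exact solution `u*(λ) = y(λ)/G(λ)` of the weighted problem. -/
noncomputable def ustar {l : ℕ} (G y : Fin l → ℝ) (lam : Fin l → ℝ) : ℝ :=
  ys y lam / Gs G lam

/-- Right-hand side of `d/dt m` in the scalar moment system, `C = E − m²`. -/
noncomputable def rhsM (γ g yv m E : ℝ) : ℝ := (E - m ^ 2) * g * γ⁻¹ * (yv - g * m)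

/-- Right-hand side of `d/dt m_{λᵢ}`, `C = E − m²`, `C̄ᵢ = E_{λᵢ} − 2 m m_{λᵢ}`. -/
noncomputable def rhsMlam (γ g yv gi yi m E mli Eli : ℝ) : ℝ :=
  (Eli - 2 * m * mli) * g * γ⁻¹ * (yv - g * m)
    + (E - m ^ 2) * gi * γ⁻¹ * (yv - g * m)
    + (E - m ^ 2) * g * γ⁻¹ * (yi - gi * m)
    - (E - m ^ 2) * g ^ 2 * γ⁻¹ * mli

/-- Right-hand side of `d/dt E` in the scalar moment system. -/
noncomputable def rhsE (γ g yv m E : ℝ) : ℝ :=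
  2 * ((E - m ^ 2) * g * γ⁻¹ * (yv * m - g * E))

/-- Right-hand side of `d/dt E_{λᵢ}` in the scalar moment system. -/
noncomputable def rhsElam (γ g yv gi yi m E mli Eli : ℝ) : ℝ :=
  2 * ((E - m ^ 2) * g * γ⁻¹ * (yv * mli - g * Eli)
    + (Eli - 2 * m * mli) * g * γ⁻¹ * (yv * m - g * E)
    + (E - m ^ 2) * gi * γ⁻¹ * (yv * m - g * E)
    + (E - m ^ 2) * g * γ⁻¹ * (yi * m - gi * E))


lemma hasFDerivAt_lincomb {l : ℕ} (c : Fin l → ℝ) (lam : Fin l → ℝ) :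
    HasFDerivAt (fun v : Fin l → ℝ => ∑ i, v i * c i)
      (∑ i, c i • ContinuousLinearMap.proj (R := ℝ) (φ := fun _ : Fin l => ℝ) i) lam := by
  have h : (fun v : Fin l → ℝ => ∑ i, v i * c i)
      = ⇑(∑ i, c i • ContinuousLinearMap.proj (R := ℝ) (φ := fun _ : Fin l => ℝ) i) := by
    funext v
    simp [ContinuousLinearMap.sum_apply, mul_comm]
  rw [h]
  exact (∑ i, c i • ContinuousLinearMap.proj (R := ℝ) (φ := fun _ : Fin l => ℝ) i).hasFDerivAt

lemma lincomb_apply_single {l : ℕ} (c : Fin l → ℝ) (i : Fin l) :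
    (∑ j, c j • ContinuousLinearMap.proj (R := ℝ) (φ := fun _ : Fin l => ℝ) j)
      (Pi.single i 1) = c i := by
  simp [ContinuousLinearMap.sum_apply, Pi.single_apply, Finset.sum_ite_eq']

theorem dirac_at_exact_solution_is_stationary_1d
    {l : ℕ} (hl : 1 ≤ l) (G : Fin l → ℝ) (y : Fin l → ℝ)
    (γ : ℝ) (hγ : 0 < γ)
    (O : Set (Fin l → ℝ)) (hO : IsOpen O) (hg : ∀ lam ∈ O, Gs G lam ≠ 0) :
    ∀ lam ∈ O,
      -- `u*` is differentiable at `lam` …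
      DifferentiableAt ℝ (ustar G y) lam ∧
      -- … with partial derivatives `∂_{λᵢ} u* = (yᵢ − Gᵢ u*)/G(λ)`
      (∀ i : Fin l,
        fderiv ℝ (ustar G y) lam (Pi.single i 1)
          = (y i - G i * ustar G y lam) / Gs G lam) ∧
      -- equivalently, `Gᵢ u* = −G(λ) ∂_{λᵢ} u* + yᵢ`
      (∀ i : Fin l,
        G i * ustar G y lam
          = -(Gs G lam * fderiv ℝ (ustar G y) lam (Pi.single i 1)) + y i) ∧
      -- and `(m, E, m_{λᵢ}, E_{λᵢ}) = (u*, (u*)², ∂_{λᵢ}u*, 2 u* ∂_{λᵢ}u*)` is an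
      -- equilibrium of the moment system at `lam`
      (rhsM γ (Gs G lam) (ys y lam) (ustar G y lam) (ustar G y lam ^ 2) = 0 ∧
       rhsE γ (Gs G lam) (ys y lam) (ustar G y lam) (ustar G y lam ^ 2) = 0 ∧
       (∀ i, rhsMlam γ (Gs G lam) (ys y lam) (G i) (y i)
          (ustar G y lam) (ustar G y lam ^ 2)
          (fderiv ℝ (ustar G y) lam (Pi.single i 1))
          (2 * ustar G y lam * fderiv ℝ (ustar G y) lam (Pi.single i 1)) = 0) ∧
       (∀ i, rhsElam γ (Gs G lam) (ys y lam) (G i) (y i)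
          (ustar G y lam) (ustar G y lam ^ 2)
          (fderiv ℝ (ustar G y) lam (Pi.single i 1))
          (2 * ustar G y lam * fderiv ℝ (ustar G y) lam (Pi.single i 1)) = 0)) := by
  intro lam hlam
  have hgne : Gs G lam ≠ 0 := hg lam hlam
  have hGd : HasFDerivAt (Gs G)
      (∑ i, G i • ContinuousLinearMap.proj (R := ℝ) (φ := fun _ : Fin l => ℝ) i) lam :=
    hasFDerivAt_lincomb G lam
  have hYd : HasFDerivAt (ys y)
      (∑ i, y i • ContinuousLinearMap.proj (R := ℝ) (φ := fun _ : Fin l => ℝ) i) lam :=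
    hasFDerivAt_lincomb y lam
  have hInv : HasFDerivAt (fun v => (Gs G v)⁻¹) _ lam :=
    (hasFDerivAt_inv hgne).comp lam hGd
  have hU0 := hYd.mul hInv
  have heq : ustar G y = fun v => ys y v * (Gs G v)⁻¹ := by
    funext v; simp [ustar, div_eq_mul_inv]
  have hU : HasFDerivAt (ustar G y) _ lam :=
    hU0.congr_of_eventuallyEq (Filter.Eventually.of_forall fun v => congrFun heq v)
  have hdiff : DifferentiableAt ℝ (ustar G y) lam := hU.differentiableAt
  have hder : ∀ i : Fin l,
      fderiv ℝ (ustar G y) lam (Pi.single i 1)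
        = (y i - G i * ustar G y lam) / Gs G lam := by
    intro i
    rw [hU.fderiv]
    simp only [ContinuousLinearMap.add_apply, ContinuousLinearMap.smul_apply,
      ContinuousLinearMap.comp_apply, ContinuousLinearMap.smulRight_apply,
      ContinuousLinearMap.one_apply, lincomb_apply_single, smul_eq_mul,
      ContinuousLinearMap.toSpanSingleton_apply]
    unfold ustar
    field_simp
    ring
  refine ⟨hdiff, hder, ?_, ?_, ?_, ?_, ?_⟩
  · intro i
    rw [hder i]
    field_simp
    ring
  · unfold rhsM; ring
  · unfold rhsE; ring
  · intro i; unfold rhsMlam; ring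
  · intro i; unfold rhsElam; ring
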